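/- Let p, q, r be distinct odd primes satisfying p ≡ 9 (mod 16), q ≡ 3 (mod 8), r ≡ 3 (mod 8), Legendre symbol (qr/p) = -1, and 2^((p-1)/4) ≡ -1 (mod p). Then -1 is a norm in the extension k₁/ℚ(√2), where k₁ = ℚ(√2, √(p·q·r)): there exists α ∈ k₁ with N_{k₁/ℚ(√2)}(α) = -1. -/

import Mathlib

open NumberField IntermediateField

/-- `ℚ(√2)` as a subfield of `ℝ`. -/
noncomputable def Qrt2 : IntermediateField ℚ ℝ :=
  IntermediateField.adjoin ℚ ({Real.sqrt 2} : Set ℝ)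


open Zsqrtd

namespace Zsm2

theorem norm_def' (z : ℤ√(-2)) : z.norm = z.re * z.re + 2 * (z.im * z.im) := by
  simp [Zsqrtd.norm]; ring

theorem norm_nonneg' (z : ℤ√(-2)) : 0 ≤ z.norm := Zsqrtd.norm_nonneg (by norm_num) z

theorem norm_eq_zero' {z : ℤ√(-2)} : z.norm = 0 ↔ z = 0 := by
  constructor
  · intro h
    rw [norm_def'] at h
    have h1 : z.re = 0 := by nlinarith [sq_nonneg z.re, sq_nonneg z.im]
    have h2 : z.im = 0 := by nlinarith [sq_nonneg z.re, sq_nonneg z.im]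
    exact Zsqrtd.ext_iff.mpr ⟨h1, h2⟩
  · rintro rfl; simp [norm_def']

theorem norm_pos' {z : ℤ√(-2)} (hz : z ≠ 0) : 0 < z.norm :=
  lt_of_le_of_ne (norm_nonneg' z) (fun h => hz (norm_eq_zero'.mp h.symm))

/-- Rounded division in `ℤ√(-2)`. -/
def div2 (x y : ℤ√(-2)) : ℤ√(-2) :=
  ⟨round (((x * star y).re : ℚ) / (y.norm : ℚ)),
   round (((x * star y).im : ℚ) / (y.norm : ℚ))⟩

def mod2 (x y : ℤ√(-2)) : ℤ√(-2) := x - y * div2 x y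

theorem round_helper (c n : ℤ) (hn : 0 < n) :
    |(c - n * round ((c : ℚ) / (n : ℚ)) : ℚ)| ≤ (n : ℚ) / 2 := by
  have h := abs_sub_round ((c : ℚ) / (n : ℚ))
  have hn' : (0:ℚ) < (n:ℚ) := by exact_mod_cast hn
  have : (c - n * round ((c : ℚ) / (n : ℚ)) : ℚ)
      = (n : ℚ) * ((c : ℚ) / (n : ℚ) - round ((c : ℚ) / (n : ℚ))) := by
    field_simp
  rw [this, abs_mul, abs_of_pos hn']
  calc (n:ℚ) * |(c : ℚ) / (n : ℚ) - round ((c : ℚ) / (n : ℚ))| ≤ (n:ℚ) * (1/2) :=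
        mul_le_mul_of_nonneg_left h (le_of_lt hn')
    _ = (n:ℚ)/2 := by ring

theorem norm_mod2_lt (x : ℤ√(-2)) {y : ℤ√(-2)} (hy : y ≠ 0) :
    (mod2 x y).norm < y.norm := by
  set n := y.norm with hn
  have hnpos : 0 < n := norm_pos' hy
  set c := x * star y with hc
  set qr := round ((c.re : ℚ) / (n : ℚ)) with hqr
  set qi := round ((c.im : ℚ) / (n : ℚ)) with hqi
  have key : mod2 x y * star y = c - (n : ℤ√(-2)) * ⟨qr, qi⟩ := by
    have h1 : ((n : ℤ) : ℤ√(-2)) = y * star y := Zsqrtd.norm_eq_mul_conj y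
    rw [mod2, hc, h1]
    have : div2 x y = ⟨qr, qi⟩ := rfl
    rw [this]; ring
  -- components of c - n * ⟨qr, qi⟩
  have hre : (c - (n : ℤ√(-2)) * ⟨qr, qi⟩).re = c.re - n * qr := by
    simp [Zsqrtd.re_mul, Zsqrtd.im_mul]
  have him : (c - (n : ℤ√(-2)) * ⟨qr, qi⟩).im = c.im - n * qi := by
    simp [Zsqrtd.re_mul, Zsqrtd.im_mul]
  have hnormstar : (star y).norm = n := Zsqrtd.norm_conj y
  have hmul : (mod2 x y).norm * n = (c - (n : ℤ√(-2)) * ⟨qr, qi⟩).norm := by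
    rw [← hnormstar, ← Zsqrtd.norm_mul, key, hnormstar]
  -- bound in ℚ
  have hA : |((c.re : ℚ) - (n:ℚ) * (qr:ℚ))| ≤ (n : ℚ) / 2 := by
    rw [hqr]; exact round_helper c.re n hnpos
  have hB : |((c.im : ℚ) - (n:ℚ) * (qi:ℚ))| ≤ (n : ℚ) / 2 := by
    rw [hqi]; exact round_helper c.im n hnpos
  have hnQ : (0:ℚ) < (n:ℚ) := by exact_mod_cast hnpos
  have hbound : ((c - (n : ℤ√(-2)) * ⟨qr, qi⟩).norm : ℚ) < (n:ℚ) * (n:ℚ) := by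
    rw [norm_def', hre, him]
    push_cast
    have hA2 : ((c.re : ℚ) - (n:ℚ)*(qr:ℚ))^2 ≤ ((n:ℚ)/2)^2 := by
      rw [← sq_abs]; exact pow_le_pow_left₀ (abs_nonneg _) hA 2
    have hB2 : ((c.im : ℚ) - (n:ℚ)*(qi:ℚ))^2 ≤ ((n:ℚ)/2)^2 := by
      rw [← sq_abs]; exact pow_le_pow_left₀ (abs_nonneg _) hB 2
    nlinarith
  have : ((mod2 x y).norm : ℚ) * (n:ℚ) < (n:ℚ) * (n:ℚ) := by
    rw [show ((mod2 x y).norm : ℚ) * (n:ℚ) = (((mod2 x y).norm * n : ℤ) : ℚ) by push_cast; ring,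
      hmul]
    exact hbound
  have := (mul_lt_mul_iff_left₀ hnQ).mp this
  exact_mod_cast this

instance nontrivial' : Nontrivial (ℤ√(-2)) := ⟨⟨0, 1, by decide⟩⟩

theorem natAbs_norm_mod2_lt (x : ℤ√(-2)) {y : ℤ√(-2)} (hy : y ≠ 0) :
    (mod2 x y).norm.natAbs < y.norm.natAbs := by
  have h := norm_mod2_lt x hy
  have h1 := norm_nonneg' (mod2 x y)
  have h2 := norm_nonneg' y
  omega

instance euclideanDomain : EuclideanDomain (ℤ√(-2)) :=
  { Zsqrtd.commRing, Zsm2.nontrivial' with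
    quotient := div2
    remainder := mod2
    quotient_zero := fun a => by
      simp only [div2]
      norm_num
      rfl
    quotient_mul_add_remainder_eq := fun a b => by rw [mod2]; ring
    r := _
    r_wellFounded := (measure (Int.natAbs ∘ Zsqrtd.norm)).wf
    remainder_lt := natAbs_norm_mod2_lt
    mul_left_not_lt := fun a b hb0 => by
      show ¬ ((a*b).norm.natAbs < a.norm.natAbs)
      apply not_lt_of_ge
      rw [Zsqrtd.norm_mul, Int.natAbs_mul]
      exact le_mul_of_one_le_right (Nat.zero_le _)
        (by
          have := norm_pos' hb0
          omega) }

end Zsm2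

theorem sq_add_two_sq (q : ℕ) [hq : Fact q.Prime] (h8 : q % 8 = 3) :
    ∃ a b : ℤ, (q : ℤ) = a ^ 2 + 2 * b ^ 2 := by
  have hq2 : q ≠ 2 := by omega
  obtain ⟨x, hx⟩ := (ZMod.exists_sq_eq_neg_two_iff (p := q) hq2).2 (Or.inr h8)
  set n : ℤ := (x.val : ℤ) with hn
  have hxx : ((n : ℤ) : ZMod q) = x := by
    rw [hn]; push_cast [ZMod.natCast_val, ZMod.cast_id]
    rfl
  have hdvd : (q : ℤ) ∣ n ^ 2 + 2 := by
    have h0 : ((n ^ 2 + 2 : ℤ) : ZMod q) = 0 := by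
      push_cast [hxx]
      rw [show (x:ZMod q)^2 = x * x from sq x, ← hx]
      ring
    exact_mod_cast (ZMod.intCast_zmod_eq_zero_iff_dvd _ _).mp h0
  have hfac : ((n ^ 2 + 2 : ℤ) : ℤ√(-2)) = ⟨n, 1⟩ * ⟨n, -1⟩ := by
    have h1 : ((n ^ 2 + 2 : ℤ) : ℤ√(-2)) = ⟨n ^ 2 + 2, 0⟩ := by
      ext
      · rw [Zsqrtd.re_intCast]
      · rw [Zsqrtd.im_intCast]
    have h2 : (⟨n, 1⟩ : ℤ√(-2)) * ⟨n, -1⟩ = ⟨n ^ 2 + 2, 0⟩ := by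
      ext <;> simp [Zsqrtd.re_mul, Zsqrtd.im_mul] <;> ring
    rw [h1, h2]
  have hqnorm : (q : ℤ√(-2)).norm = (q : ℤ) * (q : ℤ) := Zsqrtd.norm_natCast q
  have hu : ¬IsUnit ((q : ℤ√(-2))) := by
    rw [← Zsqrtd.norm_eq_one_iff, hqnorm]
    have : (2 : ℕ) ≤ q := hq.1.two_le
    rw [Int.natAbs_mul]
    simp only [Int.natAbs_natCast]
    nlinarith
  have hirr : ¬Irreducible ((q : ℤ√(-2))) := by
    intro hi
    have hp : Prime ((q : ℤ√(-2))) := hi.prime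
    have hdvd2 : ((q : ℤ√(-2))) ∣ (⟨n, 1⟩ : ℤ√(-2)) * ⟨n, -1⟩ := by
      rw [← hfac]
      have : ((q : ℤ) : ℤ√(-2)) ∣ ((n ^ 2 + 2 : ℤ) : ℤ√(-2)) :=
        map_dvd (Int.castRingHom (ℤ√(-2))) hdvd
      exact_mod_cast this
    have h2q : (2 : ℕ) ≤ q := hq.1.two_le
    rcases hp.2.2 _ _ hdvd2 with hd | hd
    · have h1 := ((Zsqrtd.intCast_dvd (q : ℤ) _).mp (by exact_mod_cast hd)).2
      have h3 : (q : ℤ) ∣ 1 := h1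
      have := Int.le_of_dvd one_pos h3
      omega
    · have h1 := ((Zsqrtd.intCast_dvd (q : ℤ) _).mp (by exact_mod_cast hd)).2
      have h3 : (q : ℤ) ∣ 1 := by
        have h4 : (q : ℤ) ∣ (-1 : ℤ) := h1
        exact dvd_neg.mp h4
      have := Int.le_of_dvd one_pos h3
      omega
  have hab : ∃ a b, (q : ℤ√(-2)) = a * b ∧ ¬IsUnit a ∧ ¬IsUnit b := by
    simpa only [true_and, not_false_iff, exists_prop, irreducible_iff, hu, not_forall,
      not_or] using hirr
  obtain ⟨a, b, hpab, hau, hbu⟩ := hab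
  have hnab : a.norm * b.norm = (q : ℤ) * (q : ℤ) := by
    rw [← Zsqrtd.norm_mul, ← hpab, hqnorm]
  have hA : a.norm.natAbs * b.norm.natAbs = q * q := by
    have := congrArg Int.natAbs hnab
    rwa [Int.natAbs_mul, Int.natAbs_mul, Int.natAbs_natCast] at this
  have hA1 : a.norm.natAbs ≠ 1 := fun h => hau (Zsqrtd.norm_eq_one_iff.mp h)
  have hB1 : b.norm.natAbs ≠ 1 := fun h => hbu (Zsqrtd.norm_eq_one_iff.mp h)
  have haq : a.norm.natAbs = q := by
    have hdq : a.norm.natAbs ∣ q * q := ⟨_, hA.symm⟩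
    rw [← sq] at hdq
    obtain ⟨k, hk, hke⟩ := (Nat.dvd_prime_pow hq.1).mp hdq
    interval_cases k
    · simp at hke; omega
    · simpa using hke
    · exfalso
      rw [hke] at hA
      have hqpos : 0 < q := hq.1.pos
      have h4 : q ^ 2 * b.norm.natAbs = q ^ 2 * 1 := by rw [hA]; ring
      exact hB1 (Nat.eq_of_mul_eq_mul_left (by positivity) h4)
  have : a.norm = (q : ℤ) := by
    have := Int.natAbs_of_nonneg (Zsm2.norm_nonneg' a)
    omega
  refine ⟨a.re, a.im, ?_⟩
  rw [Zsm2.norm_def'] at this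
  nlinarith [this]



theorem sqrt2_sq : Real.sqrt 2 * Real.sqrt 2 = 2 := Real.mul_self_sqrt (by norm_num)

theorem sqrt2_mem : Real.sqrt 2 ∈ Qrt2 :=
  IntermediateField.subset_adjoin ℚ _ (Set.mem_singleton _)

theorem ratCast_mem_Qrt2 (a : ℚ) : (a : ℝ) ∈ Qrt2 := by
  have := IntermediateField.algebraMap_mem Qrt2 a
  rwa [show algebraMap ℚ ℝ a = (a : ℝ) from rfl] at this

theorem mem_Qrt2 (a b : ℚ) : ((a : ℝ) + (b : ℝ) * Real.sqrt 2) ∈ Qrt2 :=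
  add_mem (ratCast_mem_Qrt2 a) (mul_mem (ratCast_mem_Qrt2 b) sqrt2_mem)

/-- The subalgebra `{a + b √2}`. -/
noncomputable def Qrt2S : Subalgebra ℚ ℝ where
  carrier := {x | ∃ a b : ℚ, x = (a : ℝ) + (b : ℝ) * Real.sqrt 2}
  add_mem' := by
    rintro x y ⟨a, b, rfl⟩ ⟨c, d, rfl⟩
    exact ⟨a + c, b + d, by push_cast; ring⟩
  mul_mem' := by
    rintro x y ⟨a, b, rfl⟩ ⟨c, d, rfl⟩
    refine ⟨a * c + 2 * b * d, a * d + b * c, ?_⟩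
    push_cast
    linear_combination ((b:ℝ) * (d:ℝ)) * sqrt2_sq
  algebraMap_mem' := fun r => ⟨r, 0, by simp⟩

theorem rat_sq_ne_two (c : ℚ) : (c : ℝ) ^ 2 ≠ 2 := by
  intro h
  have h0 : (0:ℝ) ≤ ((c:ℝ))^2 := sq_nonneg _
  have : Real.sqrt 2 = |(c : ℝ)| := by
    rw [← h, Real.sqrt_sq_eq_abs]
  have h2 : Irrational (Real.sqrt 2) := irrational_sqrt_two
  rw [this] at h2
  rcases abs_cases ((c:ℝ)) with ⟨he, _⟩ | ⟨he, _⟩ <;> rw [he] at h2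
  · exact h2 ⟨c, rfl⟩
  · exact h2 ⟨-c, by push_cast; ring⟩

theorem Qrt2S_inv : ∀ x ∈ Qrt2S, x⁻¹ ∈ Qrt2S := by
  rintro x ⟨a, b, rfl⟩
  by_cases hx : (a : ℝ) + (b : ℝ) * Real.sqrt 2 = 0
  · rw [hx]; exact ⟨0, 0, by simp⟩
  have hD : a ^ 2 - 2 * b ^ 2 ≠ 0 := by
    intro hD
    by_cases hb : b = 0
    · rw [hb] at hD
      have : a = 0 := by
        have : a^2 = 0 := by linarith [hD]
        exact pow_eq_zero_iff (n := 2) (by norm_num) |>.mp this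
      apply hx; rw [this, hb]; push_cast; ring
    · apply rat_sq_ne_two (a / b)
      push_cast
      field_simp
      have : (a:ℝ)^2 = 2 * (b:ℝ)^2 := by
        have := congrArg (fun t : ℚ => (t : ℝ)) hD
        push_cast at this
        linarith
      linarith
  refine ⟨a / (a ^ 2 - 2 * b ^ 2), -b / (a ^ 2 - 2 * b ^ 2), ?_⟩
  have hDR : (((a ^ 2 - 2 * b ^ 2 : ℚ)) : ℝ) ≠ 0 := by exact_mod_cast hD
  have key : ((a : ℝ) + (b : ℝ) * Real.sqrt 2) *
      ((((a : ℝ)) - (b : ℝ) * Real.sqrt 2) / (((a ^ 2 - 2 * b ^ 2 : ℚ)) : ℝ)) = 1 := by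
    rw [mul_div_assoc', div_eq_iff hDR, one_mul]
    push_cast
    linear_combination (-(b:ℝ)^2) * sqrt2_sq
  rw [eq_comm, inv_eq_of_mul_eq_one_right key]
  push_cast
  ring

theorem mem_Qrt2_iff {x : ℝ} :
    x ∈ Qrt2 ↔ ∃ a b : ℚ, x = (a : ℝ) + (b : ℝ) * Real.sqrt 2 := by
  constructor
  · intro hx
    have hle : Qrt2 ≤ Qrt2S.toIntermediateField Qrt2S_inv := by
      rw [Qrt2, IntermediateField.adjoin_le_iff]
      rintro y rfl
      exact ⟨0, 1, by push_cast; ring⟩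
    exact hle hx
  · rintro ⟨a, b, rfl⟩; exact mem_Qrt2 a b

theorem sqrt_not_mem_Qrt2 {m : ℕ} (hns : ¬IsSquare m) (hns2 : ¬IsSquare (2 * m)) :
    Real.sqrt m ∉ Qrt2 := by
  intro hmem
  obtain ⟨a, b, hab⟩ := mem_Qrt2_iff.mp hmem
  have hexp : (m : ℝ) = (a:ℝ)^2 + 2*(b:ℝ)^2 + 2*(a:ℝ)*(b:ℝ) * Real.sqrt 2 := by
    have hsq : (m : ℝ) = ((a:ℝ) + (b:ℝ) * Real.sqrt 2)^2 := by
      rw [← hab, Real.sq_sqrt (by positivity)]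
    rw [hsq]; linear_combination ((b:ℝ)^2) * sqrt2_sq
  by_cases hab0 : a * b = 0
  · rcases mul_eq_zero.mp hab0 with h | h
    · apply hns2
      rw [h] at hexp
      push_cast at hexp
      have hQ : ((2 * m : ℕ) : ℚ) = (2 * b) ^ 2 := by
        have : ((2 * m : ℕ) : ℝ) = (((2 * b) ^ 2 : ℚ) : ℝ) := by push_cast; nlinarith [hexp]
        exact_mod_cast this
      exact Rat.isSquare_natCast_iff.mp ⟨2 * b, by rw [hQ]; ring⟩
    · apply hns
      rw [h] at hexp
      push_cast at hexp
      have hQ : ((m : ℕ) : ℚ) = a ^ 2 := by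
        have : ((m : ℕ) : ℝ) = ((a ^ 2 : ℚ) : ℝ) := by push_cast; nlinarith [hexp]
        exact_mod_cast this
      exact Rat.isSquare_natCast_iff.mp ⟨a, by rw [hQ]; ring⟩
  · apply irrational_sqrt_two
    have hab0' : ((a:ℝ) * (b:ℝ)) ≠ 0 := by
      intro h; apply hab0; exact_mod_cast h
    refine ⟨((m : ℚ) - a^2 - 2*b^2) / (2*a*b), ?_⟩
    push_cast
    rw [div_eq_iff (by intro h; apply hab0'; linarith)]
    linear_combination hexp

theorem sum_two_squares_Qrt2 (p q r : ℕ) [hp : Fact p.Prime] [hq : Fact q.Prime]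
    [hr : Fact r.Prime] (hp4 : p % 4 = 1) (hq8 : q % 8 = 3) (hr8 : r % 8 = 3) :
    ∃ u v : ℝ, u ∈ Qrt2 ∧ v ∈ Qrt2 ∧ u ^ 2 + v ^ 2 = ((p * q * r : ℕ) : ℝ) := by
  obtain ⟨a, b, hab⟩ := Nat.Prime.sq_add_sq (p := p) (by omega)
  obtain ⟨x, y, hxy⟩ := sq_add_two_sq q hq8
  obtain ⟨s, t, hst⟩ := sq_add_two_sq r hr8
  set c₁ : ℚ := (a:ℚ) * ((x:ℚ) * (s:ℚ) - 2 * (y:ℚ) * (t:ℚ)) with hc₁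
  set d₁ : ℚ := -((b:ℚ) * ((x:ℚ) * (t:ℚ) + (y:ℚ) * (s:ℚ))) with hd₁
  set c₂ : ℚ := (b:ℚ) * ((x:ℚ) * (s:ℚ) - 2 * (y:ℚ) * (t:ℚ)) with hc₂
  set d₂ : ℚ := (a:ℚ) * ((x:ℚ) * (t:ℚ) + (y:ℚ) * (s:ℚ)) with hd₂
  refine ⟨(c₁ : ℝ) + (d₁ : ℝ) * Real.sqrt 2, (c₂ : ℝ) + (d₂ : ℝ) * Real.sqrt 2,
    mem_Qrt2 _ _, mem_Qrt2 _ _, ?_⟩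
  have habR : ((a:ℝ))^2 + ((b:ℝ))^2 = (p:ℝ) := by exact_mod_cast congrArg (Nat.cast : ℕ → ℝ) hab
  have hxyR : ((q:ℝ)) = ((x:ℝ))^2 + 2*((y:ℝ))^2 := by exact_mod_cast congrArg (Int.cast : ℤ → ℝ) hxy
  have hstR : ((r:ℝ)) = ((s:ℝ))^2 + 2*((t:ℝ))^2 := by exact_mod_cast congrArg (Int.cast : ℤ → ℝ) hst
  rw [hc₁, hd₁, hc₂, hd₂]
  push_cast
  linear_combination (((a:ℝ))^2 + ((b:ℝ))^2) * (((x:ℝ))*(t:ℝ) + (y:ℝ)*(s:ℝ))^2 * sqrt2_sq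
    + (((x:ℝ))^2 + 2*((y:ℝ))^2) * (((s:ℝ))^2 + 2*((t:ℝ))^2) * habR
    - (p:ℝ) * (((s:ℝ))^2 + 2*((t:ℝ))^2) * hxyR
    - (p:ℝ) * (q:ℝ) * hstR

theorem not_isSquare_of_squarefree {n : ℕ} (h : Squarefree n) (h1 : 1 < n) : ¬IsSquare n := by
  rintro ⟨k, hk⟩
  have hu : IsUnit k := h k (by rw [hk])
  have : k = 1 := Nat.isUnit_iff.mp hu
  rw [this, mul_one] at hk
  omega

set_option maxHeartbeats 1000000 in
set_option synthInstance.maxHeartbeats 100000 in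
open Polynomial in
theorem stmt3' (p q r : ℕ) [hpf : Fact p.Prime] [hqf : Fact q.Prime] [hrf : Fact r.Prime]
    (hp2 : p ≠ 2) (hq2 : q ≠ 2) (hr2 : r ≠ 2)
    (hpq : p ≠ q) (hpr : p ≠ r) (hqr : q ≠ r)
    (hp16 : p % 16 = 9) (hq8 : q % 8 = 3) (hr8 : r % 8 = 3) :
    ∃ α : ↥(IntermediateField.adjoin ↥Qrt2 ({Real.sqrt (p * q * r)} : Set ℝ)),
      Algebra.norm ↥Qrt2 α = -1 := by
  classical
  have hpp := hpf.out; have hqp := hqf.out; have hrp := hrf.out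
  set m : ℕ := p * q * r with hm
  have hmcast : ((p : ℝ) * q * r) = (m : ℝ) := by rw [hm]; push_cast; ring
  set x₀ : ℝ := Real.sqrt ((p : ℝ) * q * r) with hx₀
  have hx₀m : x₀ = Real.sqrt (m : ℝ) := by rw [hx₀, hmcast]
  -- squarefree facts
  have hcqr : Nat.Coprime q r := (Nat.coprime_primes hqp hrp).mpr hqr
  have hcpqr : Nat.Coprime p (q * r) :=
    Nat.Coprime.mul_right ((Nat.coprime_primes hpp hqp).mpr hpq)
      ((Nat.coprime_primes hpp hrp).mpr hpr)
  have hsf : Squarefree m := by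
    rw [hm, mul_assoc]
    exact (Nat.squarefree_mul hcpqr).mpr ⟨hpp.squarefree,
      (Nat.squarefree_mul hcqr).mpr ⟨hqp.squarefree, hrp.squarefree⟩⟩
  have hsf2 : Squarefree (2 * m) := by
    refine (Nat.squarefree_mul ?_).mpr ⟨Nat.prime_two.squarefree, hsf⟩
    rw [hm, mul_assoc]
    exact Nat.Coprime.mul_right ((Nat.coprime_primes Nat.prime_two hpp).mpr (Ne.symm hp2))
      (Nat.Coprime.mul_right ((Nat.coprime_primes Nat.prime_two hqp).mpr (Ne.symm hq2))
        ((Nat.coprime_primes Nat.prime_two hrp).mpr (Ne.symm hr2)))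
  have hm1 : 1 < m := by
    have := hpp.two_le; have := hqp.two_le; have := hrp.two_le
    calc 1 < 2 * 2 * 2 := by norm_num
    _ ≤ p * q * r := by gcongr
  have hns : ¬IsSquare m := not_isSquare_of_squarefree hsf hm1
  have hns2 : ¬IsSquare (2 * m) := not_isSquare_of_squarefree hsf2 (by omega)
  have hnot : x₀ ∉ Qrt2 := by rw [hx₀m]; exact sqrt_not_mem_Qrt2 hns hns2
  have hmpos : (0:ℝ) < (m:ℝ) := by exact_mod_cast Nat.zero_lt_of_lt hm1
  have hx₀sq : x₀ ^ 2 = (m : ℝ) := by rw [hx₀m]; exact Real.sq_sqrt (le_of_lt hmpos)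
  -- the quadratic polynomial
  have hmonic : (X ^ 2 - C ((m : ℕ) : ↥Qrt2)).Monic := monic_X_pow_sub_C _ (by norm_num)
  have haev : (Polynomial.aeval x₀) (X ^ 2 - C ((m : ℕ) : ↥Qrt2)) = 0 := by
    rw [map_sub, map_pow, aeval_X, aeval_C, hx₀sq]
    rw [show (algebraMap ↥Qrt2 ℝ) ((m : ℕ) : ↥Qrt2) = (m : ℝ) from map_natCast _ m]
    ring
  have hint : IsIntegral ↥Qrt2 x₀ := ⟨X ^ 2 - C ((m : ℕ) : ↥Qrt2), hmonic, haev⟩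
  have hsqK : ∀ bK : ↥Qrt2, bK ^ 2 ≠ ((m : ℕ) : ↥Qrt2) := by
    intro bK hbK
    apply hnot
    have hbr : ((bK : ℝ)) ^ 2 = (m : ℝ) := by
      have := congrArg (fun z : ↥Qrt2 => (z : ℝ)) hbK
      push_cast at this
      exact this
    have habs : x₀ = |(bK : ℝ)| := by rw [hx₀m, ← hbr, Real.sqrt_sq_eq_abs]
    rcases abs_cases ((bK : ℝ)) with ⟨he, _⟩ | ⟨he, _⟩ <;> rw [he] at habs
    · rw [habs]; exact bK.2
    · rw [habs]; exact neg_mem bK.2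
  have hirr : Irreducible (X ^ 2 - C ((m : ℕ) : ↥Qrt2)) :=
    X_pow_sub_C_irreducible_of_prime Nat.prime_two hsqK
  have hmin : minpoly ↥Qrt2 x₀ = X ^ 2 - C ((m : ℕ) : ↥Qrt2) :=
    (minpoly.eq_of_irreducible_of_monic hirr haev hmonic).symm
  haveI hfd : FiniteDimensional ↥Qrt2 ↥(IntermediateField.adjoin ↥Qrt2 ({x₀} : Set ℝ)) :=
    IntermediateField.adjoin.finiteDimensional hint
  have hrank : Module.finrank ↥Qrt2 ↥(IntermediateField.adjoin ↥Qrt2 ({x₀} : Set ℝ)) = 2 := by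
    rw [IntermediateField.adjoin.finrank hint, hmin, natDegree_X_pow_sub_C]
  -- elements xK, yK with xK² - m yK² = -1
  obtain ⟨u, v, hu, hv, huv⟩ := sum_two_squares_Qrt2 p q r (by omega) hq8 hr8
  rw [← hm] at huv
  have hvne : v ≠ 0 := by
    intro h
    apply hnot
    rw [h] at huv
    have hu2 : u ^ 2 = (m : ℝ) := by rw [← huv]; ring
    have hux : x₀ = |u| := by rw [hx₀m, ← hu2, Real.sqrt_sq_eq_abs]
    rcases abs_cases u with ⟨he, _⟩ | ⟨he, _⟩ <;> rw [he] at hux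
    · rw [hux]; exact hu
    · rw [hux]; exact neg_mem hu
  set U : ↥Qrt2 := ⟨u, hu⟩ with hU
  set V : ↥Qrt2 := ⟨v, hv⟩ with hV
  have hVne : V ≠ 0 := by
    intro h
    exact hvne (congrArg Subtype.val h)
  set xK : ↥Qrt2 := U / V with hxK
  set yK : ↥Qrt2 := 1 / V with hyK
  have hrel : xK ^ 2 - ((m : ℕ) : ↥Qrt2) * yK ^ 2 = -1 := by
    have hinj : Function.Injective (fun z : ↥Qrt2 => (z : ℝ)) := Subtype.coe_injective
    apply hinj
    show ((xK ^ 2 - ((m : ℕ) : ↥Qrt2) * yK ^ 2 : ↥Qrt2) : ℝ) = ((-1 : ↥Qrt2) : ℝ)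
    rw [hxK, hyK]
    push_cast [div_eq_mul_inv, Qrt2.coe_inv]
    show (u * v⁻¹) ^ 2 - (m : ℝ) * (1 * v⁻¹) ^ 2 = -1
    field_simp
    linear_combination huv
  set Lf := IntermediateField.adjoin ↥Qrt2 ({x₀} : Set ℝ) with hLf
  set gen : ↥Lf := IntermediateField.AdjoinSimple.gen ↥Qrt2 x₀ with hgen
  have hgencoe : (gen : ℝ) = x₀ := rfl
  have hgen2 : gen ^ 2 = ((m : ℕ) : ↥Lf) := by
    apply Subtype.coe_injective
    show ((gen ^ 2 : ↥Lf) : ℝ) = (((m : ℕ) : ↥Lf) : ℝ)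
    push_cast
    rw [hgencoe, hx₀sq]
  set E := AlgebraicClosure ↥Qrt2 with hE
  haveI : Algebra.IsIntegral ↥Qrt2 ↥Lf := Algebra.IsIntegral.of_finite _ _
  haveI : Algebra.IsSeparable ↥Qrt2 ↥Lf := Algebra.IsSeparable.of_integral _ _
  have hcard : Fintype.card (↥Lf →ₐ[↥Qrt2] E) = 2 := by
    rw [AlgHom.card]; exact hrank
  have huniv2 : (Finset.univ : Finset (↥Lf →ₐ[↥Qrt2] E)).card = 2 := by
    rw [Finset.card_univ, hcard]
  obtain ⟨σ, τ, hστ, huniv⟩ := Finset.card_eq_two.mp huniv2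
  have hgenne : σ gen ≠ τ gen := by
    intro h
    exact hστ (PowerBasis.algHom_ext (IntermediateField.adjoin.powerBasis hint)
      (by rwa [IntermediateField.adjoin.powerBasis_gen]))
  have hσ2 : σ gen ^ 2 = ((m : ℕ) : E) := by rw [← map_pow, hgen2, map_natCast]
  have hτ2 : τ gen ^ 2 = ((m : ℕ) : E) := by rw [← map_pow, hgen2, map_natCast]
  have hτσ : τ gen = -σ gen := by
    have h0 : (τ gen - σ gen) * (τ gen + σ gen) = 0 := by linear_combination hτ2 - hσ2
    rcases mul_eq_zero.mp h0 with h | h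
    · exact absurd (sub_eq_zero.mp h).symm hgenne
    · exact eq_neg_of_add_eq_zero_left h
  set α : ↥Lf := algebraMap ↥Qrt2 ↥Lf xK + algebraMap ↥Qrt2 ↥Lf yK * gen with hα
  refine ⟨α, ?_⟩
  have hmain := Algebra.norm_eq_prod_embeddings ↥Qrt2 E α
  have hprod : ∏ σ' : ↥Lf →ₐ[↥Qrt2] E, σ' α = algebraMap ↥Qrt2 E (-1) := by
    rw [show (Finset.univ : Finset (↥Lf →ₐ[↥Qrt2] E)) = {σ, τ} from huniv,
      Finset.prod_pair hστ]
    have eσ : σ α = algebraMap ↥Qrt2 E xK + algebraMap ↥Qrt2 E yK * σ gen := by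
      rw [hα, map_add, map_mul, AlgHom.commutes, AlgHom.commutes]
    have eτ : τ α = algebraMap ↥Qrt2 E xK - algebraMap ↥Qrt2 E yK * σ gen := by
      rw [hα, map_add, map_mul, AlgHom.commutes, AlgHom.commutes, hτσ]; ring
    rw [eσ, eτ, show algebraMap ↥Qrt2 E (-1)
        = algebraMap ↥Qrt2 E (xK ^ 2 - ((m : ℕ) : ↥Qrt2) * yK ^ 2) from by rw [hrel],
      map_sub, map_mul, map_pow, map_pow, map_natCast]
    linear_combination (-((algebraMap ↥Qrt2 E yK) ^ 2)) * hσ2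
  rw [hprod] at hmain
  exact (algebraMap ↥Qrt2 E).injective hmain


/-- Let `p, q, r` be distinct odd primes satisfying `p ≡ 9 (mod 16)`,
`q ≡ 3 (mod 8)`, `r ≡ 3 (mod 8)`, Legendre symbol `(qr/p) = -1`, and
`2^((p-1)/4) ≡ -1 (mod p)`. Then `-1` is a norm in the extension `k₁/ℚ(√2)`, where
`k₁ = ℚ(√2, √(p·q·r))`. -/
theorem stmt3 (p q r : ℕ) [Fact p.Prime] [Fact q.Prime] [Fact r.Prime]
    (hp2 : p ≠ 2) (hq2 : q ≠ 2) (hr2 : r ≠ 2)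
    (hpq : p ≠ q) (hpr : p ≠ r) (hqr : q ≠ r)
    (hp16 : p % 16 = 9) (hq8 : q % 8 = 3) (hr8 : r % 8 = 3)
    (hleg : legendreSym p (q * r) = -1)
    (hquart : (2 : ZMod p) ^ ((p - 1) / 4) = -1) :
    ∃ α : ↥(IntermediateField.adjoin ↥Qrt2 ({Real.sqrt (p * q * r)} : Set ℝ)),
      Algebra.norm ↥Qrt2 α = -1 := by
  exact stmt3' p q r hp2 hq2 hr2 hpq hpr hqr hp16 hq8 hr8
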